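/- Projections of optimal embeddings yield eigenvectors of the algebraic connectivity (Proposition 3): let w ∈ ℝ^N with w_i ≥ 0 for all i, and let λ := λ2(L(w)) be the second smallest eigenvalue of L(w). Let U be an n×n real matrix and set X := UᵀU. Assume the complementary-slackness conditions ⟨X, e_n e_nᵀ⟩ = 0 and ⟨X, L(w) − λ·I⟩ = 0. Then for every vector p ∈ ℝ^n, the projection Uᵀp satisfies L(w)·(Uᵀp) = λ·(Uᵀp); that is, every one-dimensional projection of the embedding lies in the eigenspace of L(w) corresponding to λ2. -/

import Mathlib

open Matrix

/-- Eigenvalues of a real symmetric matrix, listed in nondecreasing order with multiplicity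
(junk value `0` if the matrix is not Hermitian). -/
noncomputable def sortedEigs {m : ℕ} (A : Matrix (Fin m) (Fin m) ℝ) : Fin m → ℝ :=
  if hA : A.IsHermitian then fun k => hA.eigenvalues (Tuple.sort hA.eigenvalues k) else 0

/-- The supra-Laplacian `L(w) = [[L1 + W, -W], [-W, L2 + W]]` of a two-layer multiplex,
as a matrix indexed by `Fin (N + N)`. -/
noncomputable def supraLap {N : ℕ} (L1 L2 : Matrix (Fin N) (Fin N) ℝ) (w : Fin N → ℝ) :
    Matrix (Fin (N + N)) (Fin (N + N)) ℝ :=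
  Matrix.reindex finSumFinEquiv finSumFinEquiv
    (Matrix.fromBlocks (L1 + Matrix.diagonal w) (-(Matrix.diagonal w))
      (-(Matrix.diagonal w)) (L2 + Matrix.diagonal w))

/-- The interlayer edge matrix `L_{i,i+N} = (δ_i - δ_{i+N})(δ_i - δ_{i+N})ᵀ`. -/
noncomputable def interE {N : ℕ} (i : Fin N) : Matrix (Fin (N + N)) (Fin (N + N)) ℝ :=
  Matrix.vecMulVec
    (Pi.single (Fin.castAdd N i) 1 - Pi.single (Fin.natAdd N i) 1)
    (Pi.single (Fin.castAdd N i) 1 - Pi.single (Fin.natAdd N i) 1)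

/-- The matrix inner product `⟨A, B⟩ = trace(AᵀB)`. -/
noncomputable def mip {m : ℕ} (A B : Matrix (Fin m) (Fin m) ℝ) : ℝ := (Aᵀ * B).trace

/-- The block-diagonal Laplacian `L0 = diag(L1, L2)` of the disjoint union of the layers. -/
noncomputable def L0big {N : ℕ} (L1 L2 : Matrix (Fin N) (Fin N) ℝ) :
    Matrix (Fin (N + N)) (Fin (N + N)) ℝ :=
  Matrix.reindex finSumFinEquiv finSumFinEquiv (Matrix.fromBlocks L1 0 0 L2)

/-- The vector `z = (e; -e) ∈ ℝ^n`. -/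
noncomputable def zvec (N : ℕ) : Fin (N + N) → ℝ :=
  fun k => if (k : ℕ) < N then 1 else -1

lemma diag_dot {m : ℕ} (w a b : Fin m → ℝ) :
    a ⬝ᵥ (Matrix.diagonal w *ᵥ b) = ∑ i, w i * (a i * b i) := by
  simp only [dotProduct, Matrix.mulVec_diagonal]
  exact Finset.sum_congr rfl fun i _ => by ring

lemma vmv_mulVec {m : ℕ} (u v x : Fin m → ℝ) :
    Matrix.vecMulVec u v *ᵥ x = (v ⬝ᵥ x) • u := by
  ext i
  simp only [Matrix.mulVec, Matrix.vecMulVec_apply, dotProduct, Pi.smul_apply, smul_eq_mul,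
    Finset.sum_mul]
  exact Finset.sum_congr rfl fun j _ => by ring

lemma vmv_transpose {m : ℕ} (u v : Fin m → ℝ) :
    (Matrix.vecMulVec u v)ᵀ = Matrix.vecMulVec v u := by
  ext i j
  simp [Matrix.vecMulVec_apply, mul_comm]

lemma trace_gram {m : ℕ} (U C : Matrix (Fin m) (Fin m) ℝ) :
    mip (Uᵀ * U) C = ∑ j, (U j) ⬝ᵥ (Cᵀ *ᵥ (U j)) := by
  have h : (Uᵀ * U)ᵀ = Uᵀ * U := by
    rw [Matrix.transpose_mul, Matrix.transpose_transpose]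
  rw [mip, h, Matrix.mul_assoc, Matrix.trace_mul_comm]
  simp only [Matrix.trace, Matrix.diag, Matrix.mul_apply, dotProduct, Matrix.mulVec,
    Matrix.transpose_apply, Finset.sum_mul, Finset.mul_sum]
  refine Finset.sum_congr rfl fun j _ => ?_
  exact Finset.sum_congr rfl fun k _ => Finset.sum_congr rfl fun l _ => by ring

/-- Projections of optimal embeddings yield eigenvectors of the algebraic connectivity:
if `X = UᵀU` satisfies the complementary-slackness conditions `⟨X, e_n e_nᵀ⟩ = 0` and
`⟨X, L(w) - λ₂·I⟩ = 0`, then `L(w)·(Uᵀp) = λ₂·(Uᵀp)` for every `p`. -/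
theorem stmt7 (N : ℕ) (hN : 1 ≤ N)
    (L1 L2 : Matrix (Fin N) (Fin N) ℝ)
    (hL1 : L1.PosSemidef) (hL2 : L2.PosSemidef)
    (hL1e : L1 *ᵥ (fun _ => (1 : ℝ)) = 0) (hL2e : L2 *ᵥ (fun _ => (1 : ℝ)) = 0)
    (w : Fin N → ℝ) (hw : ∀ i, 0 ≤ w i)
    (lam : ℝ) (hlam : lam = sortedEigs (supraLap L1 L2 w) ⟨1, by omega⟩)
    (U : Matrix (Fin (N + N)) (Fin (N + N)) ℝ)
    (hXe : mip (Uᵀ * U) (Matrix.vecMulVec (fun _ => (1 : ℝ)) (fun _ => (1 : ℝ))) = 0)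
    (hXs : mip (Uᵀ * U)
      (supraLap L1 L2 w - lam • (1 : Matrix (Fin (N + N)) (Fin (N + N)) ℝ)) = 0) :
    ∀ p : Fin (N + N) → ℝ,
      (supraLap L1 L2 w) *ᵥ (Uᵀ *ᵥ p) = lam • (Uᵀ *ᵥ p) := by
  intro p
  set A := supraLap L1 L2 w with hAdef
  set e : Fin (N + N) → ℝ := fun _ => (1 : ℝ) with he
  set D := Matrix.diagonal w with hD
  set B := Matrix.fromBlocks (L1 + D) (-D) (-D) (L2 + D) with hB
  have hA_eq : A = B.submatrix finSumFinEquiv.symm finSumFinEquiv.symm := by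
    rw [hAdef, supraLap, Matrix.reindex_apply]
  -- transpose facts over ℝ
  have hL1t : L1ᵀ = L1 := by
    have := hL1.1
    rwa [Matrix.IsHermitian, Matrix.conjTranspose_eq_transpose_of_trivial] at this
  have hL2t : L2ᵀ = L2 := by
    have := hL2.1
    rwa [Matrix.IsHermitian, Matrix.conjTranspose_eq_transpose_of_trivial] at this
  have hBherm : B.IsHermitian := by
    rw [Matrix.IsHermitian, Matrix.conjTranspose_eq_transpose_of_trivial, hB,
      Matrix.fromBlocks_transpose]
    rw [Matrix.transpose_add, Matrix.transpose_add, Matrix.transpose_neg,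
      Matrix.diagonal_transpose, hL1t, hL2t]
  have hBpsd : B.PosSemidef := by
    refine PosSemidef.of_dotProduct_mulVec_nonneg hBherm fun x => ?_
    have hsx : star x = x := by
      funext i; simp
    rw [hsx]
    have hx12 : x = Sum.elim (x ∘ Sum.inl) (x ∘ Sum.inr) := (Sum.elim_comp_inl_inr x).symm
    have key : x ⬝ᵥ (B *ᵥ x)
        = (x ∘ Sum.inl) ⬝ᵥ (L1 *ᵥ (x ∘ Sum.inl)) + (x ∘ Sum.inr) ⬝ᵥ (L2 *ᵥ (x ∘ Sum.inr))
          + ∑ i, w i * ((x (Sum.inl i)) - (x (Sum.inr i)))^2 := by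
      conv_lhs => rw [hx12]
      rw [hB, Matrix.fromBlocks_mulVec]
      simp only [Sum.elim_comp_inl, Sum.elim_comp_inr]
      rw [sumElim_dotProduct_sumElim]
      simp only [Matrix.add_mulVec, Matrix.neg_mulVec, dotProduct_add, dotProduct_neg, hD,
        diag_dot]
      have hsum : ∑ i, w i * (x (Sum.inl i) * x (Sum.inl i))
            - ∑ i, w i * (x (Sum.inl i) * x (Sum.inr i))
            - ∑ i, w i * (x (Sum.inr i) * x (Sum.inl i))
            + ∑ i, w i * (x (Sum.inr i) * x (Sum.inr i))
          = ∑ i, w i * ((x (Sum.inl i)) - (x (Sum.inr i)))^2 := by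
        rw [← Finset.sum_sub_distrib, ← Finset.sum_sub_distrib, ← Finset.sum_add_distrib]
        exact Finset.sum_congr rfl fun i _ => by ring
      simp only [Function.comp_apply]
      linarith [hsum]
    rw [key]
    have e1 : 0 ≤ (x ∘ Sum.inl) ⬝ᵥ (L1 *ᵥ (x ∘ Sum.inl)) := by
      have := hL1.dotProduct_mulVec_nonneg (x ∘ Sum.inl)
      simpa using this
    have e2 : 0 ≤ (x ∘ Sum.inr) ⬝ᵥ (L2 *ᵥ (x ∘ Sum.inr)) := by
      have := hL2.dotProduct_mulVec_nonneg (x ∘ Sum.inr)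
      simpa using this
    have e3 : 0 ≤ ∑ i, w i * ((x (Sum.inl i)) - (x (Sum.inr i)))^2 :=
      Finset.sum_nonneg fun i _ => mul_nonneg (hw i) (sq_nonneg _)
    linarith
  have hApsd : A.PosSemidef := by
    rw [hA_eq]; exact hBpsd.submatrix _
  have hA : A.IsHermitian := hApsd.1
  have hAt : Aᵀ = A := by
    have := hA
    rwa [Matrix.IsHermitian, Matrix.conjTranspose_eq_transpose_of_trivial] at this
  have hAe : A *ᵥ e = 0 := by
    rw [hA_eq, Matrix.submatrix_mulVec_equiv]
    have h1 : (e ∘ ((finSumFinEquiv : Fin N ⊕ Fin N ≃ Fin (N+N)).symm).symm) = fun _ => (1 : ℝ) := rfl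
    rw [h1, hB, Matrix.fromBlocks_mulVec]
    have hc1 : ((fun _ => (1:ℝ)) ∘ (Sum.inl : Fin N → Fin N ⊕ Fin N)) = fun _ => (1:ℝ) := rfl
    have hc2 : ((fun _ => (1:ℝ)) ∘ (Sum.inr : Fin N → Fin N ⊕ Fin N)) = fun _ => (1:ℝ) := rfl
    rw [hc1, hc2]
    simp only [Matrix.add_mulVec, Matrix.neg_mulVec]
    rw [hL1e, hL2e]
    funext k
    cases k <;> simp
  have hee : e ⬝ᵥ e = (N + N : ℝ) := by
    simp [he, dotProduct]
  have hnpos : (0:ℝ) < (N + N : ℝ) := by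
    have : (1:ℝ) ≤ (N:ℝ) := by exact_mod_cast hN
    push_cast
    linarith
  -- spectral decomposition
  have hn2 : 1 < N + N := by omega
  set μ := hA.eigenvalues with hmu
  set σ := Tuple.sort μ with hsig
  have hlam' : lam = μ (σ ⟨1, hn2⟩) := by
    rw [hlam, sortedEigs, dif_pos hA]
  have hlam0 : 0 ≤ lam := by
    rw [hlam']
    exact hApsd.eigenvalues_nonneg _
  have hge : ∀ k, k ≠ σ ⟨0, by omega⟩ → lam ≤ μ k := by
    intro k hk
    have hj : σ (σ.symm k) = k := σ.apply_symm_apply k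
    have hj0 : σ.symm k ≠ ⟨0, by omega⟩ := by
      intro h
      exact hk (by rw [← hj, h])
    have h1le : (⟨1, hn2⟩ : Fin (N + N)) ≤ σ.symm k := by
      have hne : (σ.symm k).val ≠ 0 := fun h => hj0 (Fin.ext h)
      rw [Fin.le_def, Fin.val_mk]
      omega
    calc lam = μ (σ ⟨1, hn2⟩) := hlam'
      _ ≤ μ (σ (σ.symm k)) := Tuple.monotone_sort μ h1le
      _ = μ k := by rw [hj]
  set V : Matrix (Fin (N + N)) (Fin (N + N)) ℝ :=
    ((Matrix.IsHermitian.eigenvectorUnitary hA : Matrix.unitaryGroup (Fin (N + N)) ℝ) :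
      Matrix (Fin (N + N)) (Fin (N + N)) ℝ) with hV
  have hstarV : star V = Vᵀ := by
    rw [Matrix.star_eq_conjTranspose, Matrix.conjTranspose_eq_transpose_of_trivial]
  have hVV : V * Vᵀ = 1 := by
    have := (Matrix.mem_unitaryGroup_iff).mp (Matrix.IsHermitian.eigenvectorUnitary hA).2
    rwa [← hV, hstarV] at this
  have hVV' : Vᵀ * V = 1 := by
    have := (Matrix.mem_unitaryGroup_iff').mp (Matrix.IsHermitian.eigenvectorUnitary hA).2
    rwa [← hV, hstarV] at this
  have hspec : A = V * Matrix.diagonal μ * Vᵀ := by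
    have h := hA.spectral_theorem
    rw [Unitary.conjStarAlgAut_apply] at h
    rwa [← hV, hstarV, RCLike.ofReal_real_eq_id, Function.id_comp] at h
  -- transport facts
  have factA : ∀ x y : Fin (N + N) → ℝ, (Vᵀ *ᵥ x) ⬝ᵥ (Vᵀ *ᵥ y) = x ⬝ᵥ y := by
    intro x y
    rw [Matrix.mulVec_transpose, ← Matrix.dotProduct_mulVec, Matrix.mulVec_mulVec, hVV,
      Matrix.one_mulVec]
  have factB : ∀ x : Fin (N + N) → ℝ,
      x ⬝ᵥ (A *ᵥ x) = ∑ k, μ k * ((Vᵀ *ᵥ x) k * (Vᵀ *ᵥ x) k) := by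
    intro x
    conv_lhs => rw [hspec]
    rw [← Matrix.mulVec_mulVec, ← Matrix.mulVec_mulVec, Matrix.dotProduct_mulVec,
      ← Matrix.mulVec_transpose, diag_dot]
  have factC : ∀ k, μ k * ((Vᵀ *ᵥ e) k) = 0 := by
    intro k
    have h0 : V *ᵥ (Matrix.diagonal μ *ᵥ (Vᵀ *ᵥ e)) = 0 := by
      rw [Matrix.mulVec_mulVec, Matrix.mulVec_mulVec, ← hspec, hAe]
    have h1 : Matrix.diagonal μ *ᵥ (Vᵀ *ᵥ e) = 0 := by
      have := congrArg (fun z => Vᵀ *ᵥ z) h0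
      simpa [Matrix.mulVec_mulVec, ← Matrix.mul_assoc, hVV', Matrix.one_mulVec] using this
    have := congrFun h1 k
    simpa [Matrix.mulVec_diagonal] using this
  -- the key inequality: on the orthogonal complement of e, the quadratic form is ≥ lam
  have crux : ∀ v : Fin (N + N) → ℝ, e ⬝ᵥ v = 0 → lam * (v ⬝ᵥ v) ≤ v ⬝ᵥ (A *ᵥ v) := by
    intro v hv
    set c := Vᵀ *ᵥ v with hc
    set d := Vᵀ *ᵥ e with hd2
    have hquad : v ⬝ᵥ (A *ᵥ v) = ∑ k, μ k * (c k * c k) := factB v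
    have hnorm : v ⬝ᵥ v = ∑ k, c k * c k := by
      rw [← factA v v]
      simp [dotProduct]
      rfl
    rcases le_or_gt lam 0 with h0 | h0
    · have h1 : 0 ≤ v ⬝ᵥ (A *ᵥ v) := by
        have := hApsd.dotProduct_mulVec_nonneg v
        have hsv : star v = v := by funext i; simp
        rwa [hsv] at this
      have h2 : 0 ≤ v ⬝ᵥ v := by
        rw [hnorm]
        exact Finset.sum_nonneg fun k _ => mul_self_nonneg _
      nlinarith
    · set k0 := σ ⟨0, by omega⟩ with hk0def
      have hdzero : ∀ k, k ≠ k0 → d k = 0 := by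
        intro k hk
        have h1 := hge k hk
        have h2 := factC k
        have hμk : μ k ≠ 0 := by
          intro h
          rw [h] at h1
          linarith
        rcases mul_eq_zero.mp h2 with h | h
        · exact absurd h hμk
        · exact h
      have hdd : d ⬝ᵥ d = (N + N : ℝ) := by rw [hd2, factA e e, hee]
      have hdk0 : d k0 ≠ 0 := by
        intro h
        have hz : d = 0 := by
          funext k
          by_cases hk : k = k0
          · rw [hk]; exact h
          · exact hdzero k hk
        rw [hz] at hdd
        simp at hdd
        linarith
      have hdc : d ⬝ᵥ c = 0 := by rw [hd2, hc, factA e v, hv]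
      have hsingle : d ⬝ᵥ c = d k0 * c k0 := by
        rw [dotProduct]
        exact Finset.sum_eq_single k0
          (fun k _ hk => by rw [hdzero k hk, zero_mul])
          (fun h => absurd (Finset.mem_univ k0) h)
      have hck0 : c k0 = 0 := by
        have h00 : d k0 * c k0 = 0 := by rw [← hsingle]; exact hdc
        rcases mul_eq_zero.mp h00 with h | h
        · exact absurd h hdk0
        · exact h
      rw [hquad, hnorm, Finset.mul_sum]
      refine Finset.sum_le_sum fun k _ => ?_
      by_cases hk : k = k0
      · rw [hk, hck0]
        simp
      · exact mul_le_mul_of_nonneg_right (hge k hk) (mul_self_nonneg _)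
  -- the PSD certificate matrix M
  set M : Matrix (Fin (N + N)) (Fin (N + N)) ℝ :=
    A - lam • 1 + (lam / (N + N : ℝ)) • Matrix.vecMulVec e e with hM
  have hMt : Mᵀ = M := by
    rw [hM, Matrix.transpose_add, Matrix.transpose_sub, Matrix.transpose_smul,
      Matrix.transpose_smul, Matrix.transpose_one, hAt, vmv_transpose]
  have hMherm : M.IsHermitian := by
    rw [Matrix.IsHermitian, Matrix.conjTranspose_eq_transpose_of_trivial, hMt]
  have hMmulVec : ∀ x : Fin (N + N) → ℝ,
      M *ᵥ x = A *ᵥ x - lam • x + (lam / (N + N : ℝ)) • ((e ⬝ᵥ x) • e) := by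
    intro x
    rw [hM, Matrix.add_mulVec, Matrix.sub_mulVec, Matrix.smul_mulVec,
      Matrix.smul_mulVec, Matrix.one_mulVec, vmv_mulVec]
  have hMdot : ∀ x : Fin (N + N) → ℝ,
      x ⬝ᵥ (M *ᵥ x) = x ⬝ᵥ (A *ᵥ x) - lam * (x ⬝ᵥ x)
        + (lam / (N + N : ℝ)) * ((e ⬝ᵥ x) * (e ⬝ᵥ x)) := by
    intro x
    rw [hMmulVec x, dotProduct_add, dotProduct_sub, dotProduct_smul, dotProduct_smul,
      dotProduct_smul]
    simp [smul_eq_mul, dotProduct_comm e x]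
  have hMpsd : M.PosSemidef := by
    refine PosSemidef.of_dotProduct_mulVec_nonneg hMherm fun x => ?_
    have hsx : star x = x := by funext i; simp
    rw [hsx, hMdot x]
    set α : ℝ := (e ⬝ᵥ x) / (N + N : ℝ) with hα
    set x' : Fin (N + N) → ℝ := x - α • e with hx'
    have hxsplit : x = x' + α • e := by rw [hx']; abel
    have hex : e ⬝ᵥ x = α * (N + N : ℝ) := by
      rw [hα]; field_simp
    have hex' : e ⬝ᵥ x' = 0 := by
      rw [hx', dotProduct_sub, dotProduct_smul, hee, smul_eq_mul, hex]
      ring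
    have hAx' : e ⬝ᵥ (A *ᵥ x') = 0 := by
      rw [Matrix.dotProduct_mulVec, ← Matrix.mulVec_transpose, hAt, hAe]
      simp
    have hAx : x ⬝ᵥ (A *ᵥ x) = x' ⬝ᵥ (A *ᵥ x') := by
      conv_lhs => rw [hxsplit]
      rw [Matrix.mulVec_add, Matrix.mulVec_smul, hAe, smul_zero, add_zero,
        add_dotProduct, smul_dotProduct, hAx', smul_eq_mul, mul_zero, add_zero]
    have hxx : x ⬝ᵥ x = x' ⬝ᵥ x' + α * α * (N + N : ℝ) := by
      have h1 : x' ⬝ᵥ e = 0 := by rw [dotProduct_comm]; exact hex'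
      conv_lhs => rw [hxsplit]
      simp only [add_dotProduct, dotProduct_add, smul_dotProduct, dotProduct_smul,
        smul_eq_mul, hee, hex', h1, mul_zero, add_zero, zero_add]
      ring
    have hcx := crux x' hex'
    rw [hAx, hxx, hex]
    have hne : (N + N : ℝ) ≠ 0 := ne_of_gt hnpos
    have hsimp : (lam / (N + N : ℝ)) * ((α * (N + N : ℝ)) * (α * (N + N : ℝ)))
        = lam * (α * α) * (N + N : ℝ) := by
      field_simp
    rw [hsimp]
    nlinarith [hcx]
  -- the trace conditions
  have htr : mip (Uᵀ * U) M = 0 := by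
    have hlin : mip (Uᵀ * U) M = mip (Uᵀ * U) (A - lam • 1)
        + (lam / (N + N : ℝ)) * mip (Uᵀ * U) (Matrix.vecMulVec e e) := by
      simp only [mip, hM, Matrix.mul_add, Matrix.mul_smul, Matrix.trace_add, Matrix.trace_smul,
        smul_eq_mul]
    rw [hlin, hXs, hXe]
    ring
  have hterm : ∀ j, (U j) ⬝ᵥ ((Matrix.vecMulVec e e)ᵀ *ᵥ (U j)) = (e ⬝ᵥ U j) * (e ⬝ᵥ U j) := by
    intro j
    rw [vmv_transpose, vmv_mulVec, dotProduct_smul, smul_eq_mul, dotProduct_comm (U j) e]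
  have heUj : ∀ j, e ⬝ᵥ (U j) = 0 := by
    have hg := trace_gram U (Matrix.vecMulVec e e)
    rw [hXe] at hg
    have h0 : (∑ j, (e ⬝ᵥ U j) * (e ⬝ᵥ U j)) = 0 := by
      calc ∑ j, (e ⬝ᵥ U j) * (e ⬝ᵥ U j)
          = ∑ j, (U j) ⬝ᵥ ((Matrix.vecMulVec e e)ᵀ *ᵥ (U j)) :=
            Finset.sum_congr rfl fun j _ => (hterm j).symm
        _ = 0 := hg.symm
    intro j
    have hz := (Finset.sum_eq_zero_iff_of_nonneg
      (fun j _ => mul_self_nonneg (e ⬝ᵥ U j))).mp h0 j (Finset.mem_univ j)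
    exact mul_self_eq_zero.mp hz
  have htr' : ∑ j, (U j) ⬝ᵥ (M *ᵥ (U j)) = 0 := by
    have hg := trace_gram U M
    rw [htr, hMt] at hg
    exact hg.symm
  have hMrows : ∀ j, M *ᵥ (U j) = 0 := by
    intro j
    have hnn : ∀ j ∈ Finset.univ, 0 ≤ (U j) ⬝ᵥ (M *ᵥ (U j)) := by
      intro j _
      have h1 := hMpsd.dotProduct_mulVec_nonneg (U j)
      have hs : star (U j) = U j := by funext i; simp
      rwa [hs] at h1
    have hz := (Finset.sum_eq_zero_iff_of_nonneg hnn).mp htr' j (Finset.mem_univ j)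
    have hz' : star (U j) ⬝ᵥ (M *ᵥ (U j)) = 0 := by
      have hs : star (U j) = U j := by funext i; simp
      rw [hs]; exact hz
    exact (hMpsd.dotProduct_mulVec_zero_iff (U j)).mp hz'
  -- put everything together
  have hq : Uᵀ *ᵥ p = ∑ j, p j • (fun k => U j k) := by
    funext k
    simp [Matrix.mulVec, Matrix.transpose_apply, dotProduct, Finset.sum_apply, mul_comm]
  have hMq : M *ᵥ (Uᵀ *ᵥ p) = 0 := by
    rw [hq]
    have hlin : M *ᵥ (∑ j, p j • (fun k => U j k)) = ∑ j, p j • (M *ᵥ (U j)) := by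
      rw [show (M *ᵥ ∑ j, p j • (fun k => U j k)) = M.mulVecLin (∑ j, p j • (fun k => U j k))
        from rfl, map_sum]
      exact Finset.sum_congr rfl fun j _ => by
        rw [LinearMap.map_smul, Matrix.mulVecLin_apply]
    rw [hlin]
    simp [hMrows]
  have hUe : U *ᵥ e = 0 := by
    funext j
    simp only [Pi.zero_apply]
    rw [show (U *ᵥ e) j = (U j) ⬝ᵥ e from rfl, dotProduct_comm, heUj j]
  have heq : e ⬝ᵥ (Uᵀ *ᵥ p) = 0 := by
    rw [Matrix.dotProduct_mulVec, Matrix.vecMul_transpose, hUe, zero_dotProduct]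
  have h0 : A *ᵥ (Uᵀ *ᵥ p) - lam • (Uᵀ *ᵥ p) = 0 := by
    have h1 := hMmulVec (Uᵀ *ᵥ p)
    rw [hMq, heq] at h1
    simpa using h1.symm
  exact sub_eq_zero.mp h0
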